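/- Let 𝒩 be a nonempty subset of the positive semidefinite Hermitian q×q matrices which is totally ordered and bounded above with respect to the Loewner order ⪰. Then there exist a positive semidefinite Hermitian matrix N₀ and a sequence (Nₙ) of elements of 𝒩 such that N₀ ⪰ N for all N ∈ 𝒩 and Nₙ → N₀ in the norm topology. -/

import Mathlib

open scoped ComplexOrder
open scoped Matrix


lemma psd_entry_le_trace {q : ℕ} {M : Matrix (Fin q) (Fin q) ℂ} (hM : M.PosSemidef)
    (i j : Fin q) : ‖M i j‖ ≤ M.trace.re := by
  obtain ⟨B, rfl⟩ : ∃ B : Matrix (Fin q) (Fin q) ℂ, M = Bᴴ * B := by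
    open scoped MatrixOrder in
    exact ⟨CFC.sqrt M, by rw [(Matrix.nonneg_iff_posSemidef.mp (CFC.sqrt_nonneg M)).1.eq, CFC.sqrt_mul_sqrt_self M hM.nonneg]⟩
  let c : Fin q → EuclideanSpace ℂ (Fin q) := fun i => WithLp.toLp 2 (fun k => B k i)
  have hfg : ∀ i j, (Bᴴ * B) i j = (inner ℂ (c i) (c j) : ℂ) := fun i j => by
    simp [Matrix.mul_apply, Matrix.conjTranspose_apply, PiLp.inner_apply,
      RCLike.inner_apply, c]
    exact Finset.sum_congr rfl fun _ _ => mul_comm _ _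
  have hd : ∀ i, ((Bᴴ * B) i i).re = ‖c i‖ ^ 2 := fun i => by
    rw [hfg, ← RCLike.re_to_complex, inner_self_eq_norm_sq]
  have hT : (Bᴴ * B).trace.re = ∑ k, ‖c k‖ ^ 2 := by
    simp [Matrix.trace, Matrix.diag, Complex.re_sum, hd]
  have hTnn : 0 ≤ (Bᴴ * B).trace.re := by rw [hT]; positivity
  have hle : ∀ i, ‖c i‖ ≤ Real.sqrt ((Bᴴ * B).trace.re) := by
    intro i
    have h1 : ‖c i‖ ^ 2 ≤ (Bᴴ * B).trace.re := by
      rw [hT]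
      exact Finset.single_le_sum (f := fun k => ‖c k‖ ^ 2) (fun k _ => by positivity) (Finset.mem_univ i)
    exact (Real.le_sqrt (norm_nonneg _) hTnn).mpr h1
  calc ‖(Bᴴ * B) i j‖ = ‖(inner ℂ (c i) (c j) : ℂ)‖ := by rw [hfg]
    _ ≤ ‖c i‖ * ‖c j‖ := norm_inner_le_norm _ _
    _ ≤ Real.sqrt ((Bᴴ * B).trace.re) * Real.sqrt ((Bᴴ * B).trace.re) :=
        mul_le_mul (hle i) (hle j) (norm_nonneg _) (Real.sqrt_nonneg _)
    _ = (Bᴴ * B).trace.re := Real.mul_self_sqrt hTnn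

lemma psd_trace_re_nonneg {q : ℕ} {M : Matrix (Fin q) (Fin q) ℂ} (hM : M.PosSemidef) :
    0 ≤ M.trace.re := by
  have h : ∀ i, 0 ≤ (M i i).re := fun i => by
    have h0 : (0 : ℂ) ≤ M i i := by
      have := hM.dotProduct_mulVec_nonneg (Pi.single i 1)
      simpa [dotProduct, Pi.single_apply] using this
    simpa using (Complex.le_def.mp h0).1
  simp only [Matrix.trace, Matrix.diag, Complex.re_sum]
  exact Finset.sum_nonneg fun i _ => h i

lemma psd_eq_zero_of_trace_re {q : ℕ} {M : Matrix (Fin q) (Fin q) ℂ} (hM : M.PosSemidef)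
    (h : M.trace.re = 0) : M = 0 := by
  ext i j
  have h1 := psd_entry_le_trace hM i j
  rw [h] at h1
  have h2 : ‖M i j‖ = 0 := le_antisymm h1 (norm_nonneg _)
  simpa using norm_eq_zero.mp h2

/-- Let `𝒩` be a nonempty subset of the positive semidefinite Hermitian `q × q` matrices which
is totally ordered and bounded above with respect to the Loewner order `⪰`.  Then there exist a
positive semidefinite matrix `N₀` and a sequence `(Nₙ)` of elements of `𝒩` such that `N₀ ⪰ N`
for all `N ∈ 𝒩` and `Nₙ → N₀` in the norm topology. -/
theorem exists_upperBound_limit_of_totallyOrdered_psd {q : ℕ}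
    (N : Set (Matrix (Fin q) (Fin q) ℂ)) (hne : N.Nonempty)
    (hpsd : ∀ A ∈ N, A.PosSemidef)
    (htot : ∀ A ∈ N, ∀ B ∈ N, (A - B).PosSemidef ∨ (B - A).PosSemidef)
    (hbdd : ∃ C : Matrix (Fin q) (Fin q) ℂ, ∀ A ∈ N, (C - A).PosSemidef) :
    ∃ N₀ : Matrix (Fin q) (Fin q) ℂ, N₀.PosSemidef ∧ (∀ A ∈ N, (N₀ - A).PosSemidef) ∧
      ∃ u : ℕ → Matrix (Fin q) (Fin q) ℂ, (∀ n, u n ∈ N) ∧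
        Filter.Tendsto u Filter.atTop (nhds N₀) := by
  classical
  set t : Matrix (Fin q) (Fin q) ℂ → ℝ := fun A => A.trace.re with ht
  -- trace of a difference
  have htsub : ∀ A B : Matrix (Fin q) (Fin q) ℂ, (A - B).trace.re = t A - t B := by
    intro A B; simp [ht, Matrix.trace_sub]
  -- order vs trace
  have key : ∀ A ∈ N, ∀ B ∈ N, t B ≤ t A → (A - B).PosSemidef := by
    intro A hA B hB hle
    rcases htot A hA B hB with h | h
    · exact h
    · have h1 : 0 ≤ t B - t A := by rw [← htsub]; exact psd_trace_re_nonneg h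
      have h2 : (B - A).trace.re = 0 := by rw [htsub]; linarith
      have h3 : B - A = 0 := psd_eq_zero_of_trace_re h h2
      have h4 : A - B = 0 := by rw [← neg_sub, h3, neg_zero]
      rw [h4]; exact Matrix.PosSemidef.zero
  obtain ⟨C, hC⟩ := hbdd
  have hSne : (t '' N).Nonempty := hne.image t
  have hSbdd : BddAbove (t '' N) := by
    refine ⟨t C, ?_⟩
    rintro x ⟨A, hA, rfl⟩
    have := psd_trace_re_nonneg (hC A hA)
    rw [htsub] at this; linarith
  set s := sSup (t '' N) with hs
  have hts : ∀ A ∈ N, t A ≤ s := fun A hA => le_csSup hSbdd ⟨A, hA, rfl⟩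
  -- choose the sequence
  have hseq : ∀ n : ℕ, ∃ A ∈ N, s - 1 / (n + 1) < t A := by
    intro n
    have hlt : s - 1 / (n + 1) < s := by
      have : (0 : ℝ) < 1 / (n + 1) := by positivity
      linarith
    obtain ⟨x, ⟨A, hA, rfl⟩, hx⟩ := exists_lt_of_lt_csSup hSne hlt
    exact ⟨A, hA, hx⟩
  choose u hmem hlb using hseq
  -- entry bound for differences within the sequence
  have hdiff : ∀ m n K : ℕ, K ≤ m → K ≤ n → ∀ i j,
      ‖u m i j - u n i j‖ ≤ 1 / (K + 1) := by
    intro m n K hm hn i j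
    have hK : s - 1 / (K + 1) ≤ s - 1 / (m + 1) := by
      have : 1 / ((m : ℝ) + 1) ≤ 1 / (K + 1) := by
        apply one_div_le_one_div_of_le (by positivity)
        exact_mod_cast Nat.succ_le_succ hm
      linarith
    have hK' : s - 1 / (K + 1) ≤ s - 1 / (n + 1) := by
      have : 1 / ((n : ℝ) + 1) ≤ 1 / (K + 1) := by
        apply one_div_le_one_div_of_le (by positivity)
        exact_mod_cast Nat.succ_le_succ hn
      linarith
    rcases le_total (t (u n)) (t (u m)) with h | h
    · have hp := key _ (hmem m) _ (hmem n) h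
      have hb := psd_entry_le_trace hp i j
      have : (u m - u n).trace.re ≤ 1 / (K + 1) := by
        rw [htsub]
        have h1 := hts _ (hmem m)
        have h2 := hlb n
        linarith
      calc ‖u m i j - u n i j‖ = ‖(u m - u n) i j‖ := by
            simp [Matrix.sub_apply]
        _ ≤ (u m - u n).trace.re := hb
        _ ≤ 1 / (K + 1) := this
    · have hp := key _ (hmem n) _ (hmem m) h
      have hb := psd_entry_le_trace hp i j
      have : (u n - u m).trace.re ≤ 1 / (K + 1) := by
        rw [htsub]
        have h1 := hts _ (hmem n)
        have h2 := hlb m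
        linarith
      calc ‖u m i j - u n i j‖ = ‖(u n - u m) i j‖ := by
            rw [show u m i j - u n i j = -((u n - u m) i j) by simp only [Matrix.sub_apply]; ring]
            exact (norm_neg _)
        _ ≤ (u n - u m).trace.re := hb
        _ ≤ 1 / (K + 1) := this
  -- entrywise limits
  have hcauchy : ∀ i j, CauchySeq (fun n => u n i j) := by
    intro i j
    exact cauchySeq_of_le_tendsto_0 (fun K => 1 / ((K : ℝ) + 1))
      (fun m n K hm hn => by rw [Complex.dist_eq]; exact hdiff m n K hm hn i j)
      tendsto_one_div_add_atTop_nhds_zero_nat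
  have hlim : ∀ i j, ∃ L : ℂ, Filter.Tendsto (fun n => u n i j) Filter.atTop (nhds L) :=
    fun i j => cauchySeq_tendsto_of_complete (hcauchy i j)
  choose L hL using hlim
  set N₀ : Matrix (Fin q) (Fin q) ℂ := Matrix.of L with hN₀
  have htend : Filter.Tendsto u Filter.atTop (nhds N₀) := by
    rw [show (nhds N₀ : Filter (Matrix (Fin q) (Fin q) ℂ)) = nhds N₀ from rfl]
    refine tendsto_pi_nhds.mpr fun i => tendsto_pi_nhds.mpr fun j => hL i j
  -- quadratic form convergence
  have hquad : ∀ x : Fin q → ℂ, Filter.Tendsto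
      (fun n => dotProduct (star x) ((u n) *ᵥ x)) Filter.atTop
      (nhds (dotProduct (star x) (N₀ *ᵥ x))) := by
    intro x
    simp only [dotProduct, Matrix.mulVec]
    apply tendsto_finset_sum
    intro i _
    apply Filter.Tendsto.const_mul
    apply tendsto_finset_sum
    intro j _
    exact (hL i j).mul_const _
  -- N₀ is Hermitian
  have hherm : N₀.IsHermitian := by
    apply Matrix.ext
    intro i j
    have h1 : Filter.Tendsto (fun n => (starRingEnd ℂ) (u n j i)) Filter.atTop
        (nhds ((starRingEnd ℂ) (N₀ j i))) := (Complex.continuous_conj.tendsto _).comp (hL j i)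
    have h2 : ∀ n, (starRingEnd ℂ) (u n j i) = u n i j := fun n => by
      have h3 := congrFun (congrFun (hpsd _ (hmem n)).1 i) j
      simpa [Matrix.conjTranspose_apply, Complex.star_def] using h3
    rw [Filter.tendsto_congr h2] at h1
    have := tendsto_nhds_unique h1 (hL i j)
    simpa [Matrix.conjTranspose_apply, hN₀] using this
  -- helper: limit of eventually-PSD quadratic forms is nonneg
  have hpos : ∀ (x : Fin q → ℂ) (f : ℕ → ℂ) (Lx : ℂ),
      Filter.Tendsto f Filter.atTop (nhds Lx) → (∀ᶠ n in Filter.atTop, 0 ≤ f n) → 0 ≤ Lx := by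
    intro x f Lx hf hev
    rw [Complex.le_def]
    constructor
    · have hre : Filter.Tendsto (fun n => (f n).re) Filter.atTop (nhds Lx.re) :=
        (Complex.continuous_re.tendsto _).comp hf
      refine le_of_tendsto_of_tendsto tendsto_const_nhds hre ?_
      filter_upwards [hev] with n hn
      exact (Complex.le_def.mp hn).1
    · have him : Filter.Tendsto (fun n => (f n).im) Filter.atTop (nhds Lx.im) :=
        (Complex.continuous_im.tendsto _).comp hf
      have him0 : Filter.Tendsto (fun n => (f n).im) Filter.atTop (nhds 0) := by
        have heq0 : (fun _ : ℕ => (0 : ℝ)) =ᶠ[Filter.atTop] fun n => (f n).im := by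
          filter_upwards [hev] with n hn
          simpa using (Complex.le_def.mp hn).2
        exact Filter.Tendsto.congr' heq0 tendsto_const_nhds
      simpa using (tendsto_nhds_unique him him0).symm
  -- N₀ is PSD
  have hN₀psd : N₀.PosSemidef := by
    refine Matrix.PosSemidef.of_dotProduct_mulVec_nonneg hherm fun x => ?_
    refine hpos x _ _ (hquad x) ?_
    filter_upwards with n
    exact (hpsd _ (hmem n)).dotProduct_mulVec_nonneg x
  refine ⟨N₀, hN₀psd, ?_, u, hmem, htend⟩
  -- N₀ is an upper bound
  intro A hA
  rcases lt_or_eq_of_le (hts A hA) with hlt | heq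
  · refine Matrix.PosSemidef.of_dotProduct_mulVec_nonneg (hherm.sub (hpsd A hA).1) fun x => ?_
    have htend2 : Filter.Tendsto (fun n => dotProduct (star x) ((u n - A) *ᵥ x))
        Filter.atTop (nhds (dotProduct (star x) ((N₀ - A) *ᵥ x))) := by
      simp only [Matrix.sub_mulVec, dotProduct_sub]
      exact (hquad x).sub tendsto_const_nhds
    refine hpos x _ _ htend2 ?_
    have hev : ∀ᶠ n in Filter.atTop, t A ≤ t (u n) := by
      have hev' := tendsto_one_div_add_atTop_nhds_zero_nat.eventually_lt_const
        (show (0 : ℝ) < s - t A by linarith)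
      filter_upwards [hev'] with n hn
      have := hlb n
      linarith
    filter_upwards [hev] with n hn
    exact (key _ (hmem n) _ hA hn).dotProduct_mulVec_nonneg x
  · -- t A = s : then u n → A, so N₀ = A
    have hA0 : ∀ n, (A - u n).PosSemidef := fun n => key _ hA _ (hmem n) (by rw [heq]; exact hts _ (hmem n))
    have hconv : ∀ i j, Filter.Tendsto (fun n => u n i j) Filter.atTop (nhds (A i j)) := by
      intro i j
      have hb : ∀ n, ‖u n i j - A i j‖ ≤ 1 / ((n : ℝ) + 1) := by
        intro n
        have hb1 := psd_entry_le_trace (hA0 n) i j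
        have hb2 : (A - u n).trace.re ≤ 1 / (n + 1) := by
          rw [htsub, heq]
          have := hlb n
          linarith
        calc ‖u n i j - A i j‖ = ‖(A - u n) i j‖ := by
              rw [show u n i j - A i j = -((A - u n) i j) by simp only [Matrix.sub_apply]; ring]
              exact norm_neg _
          _ ≤ (A - u n).trace.re := hb1
          _ ≤ 1 / (n + 1) := hb2
      rw [tendsto_iff_dist_tendsto_zero]
      apply squeeze_zero (fun n => dist_nonneg) (fun n => by
        rw [Complex.dist_eq]; exact hb n) tendsto_one_div_add_atTop_nhds_zero_nat
    have hAN : N₀ = A := by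
      apply Matrix.ext
      intro i j
      exact tendsto_nhds_unique (hL i j) (hconv i j)
    rw [hAN, sub_self]
    exact Matrix.PosSemidef.zero
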